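/- Let F be a class of reflexive and transitive Kripke frames closed under point-generated subframes. Then for any modal formulas Γ ∪ {φ}: Γ ⊨^g_F φ iff □Γ ⊨_F □φ iff □Γ ⊨_F φ. -/

import Mathlib

/-- Formulas of the basic modal language. -/
inductive Form : Type where
  | var : ℕ → Form
  | bot : Form
  | imp : Form → Form → Form
  | box : Form → Form

def Form.neg (φ : Form) : Form := .imp φ .bot
def Form.dia (φ : Form) : Form := .neg (.box (.neg φ))
def Form.or (φ ψ : Form) : Form := .imp (.neg φ) ψ
def Form.and (φ ψ : Form) : Form := .neg (.imp φ (.neg ψ))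

/-- A Kripke frame: a nonempty set of worlds with an accessibility relation. -/
structure Frame : Type 1 where
  W : Type
  R : W → W → Prop
  nonempty : Nonempty W

/-- Truth at a world of a model. -/
def Frame.sat (F : Frame) (V : ℕ → F.W → Prop) : F.W → Form → Prop
  | w, .var n => V n w
  | _, .bot => False
  | w, .imp φ ψ => F.sat V w φ → F.sat V w ψ
  | w, .box φ => ∀ u, F.R w u → F.sat V u φ

/-- Local consequence with respect to a class of frames. -/
def localConseq (C : Frame → Prop) (Γ : Set Form) (φ : Form) : Prop :=
  ∀ F, C F → ∀ V : ℕ → F.W → Prop, ∀ w : F.W,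
    (∀ ψ ∈ Γ, F.sat V w ψ) → F.sat V w φ

/-- Global consequence with respect to a class of frames. -/
def globalConseq (C : Frame → Prop) (Γ : Set Form) (φ : Form) : Prop :=
  ∀ F, C F → ∀ V : ℕ → F.W → Prop,
    (∀ ψ ∈ Γ, ∀ w : F.W, F.sat V w ψ) → ∀ w : F.W, F.sat V w φ

/-- □ⁿφ -/
def boxIter : ℕ → Form → Form
  | 0, φ => φ
  | n+1, φ => .box (boxIter n φ)

/-- ◇ⁿφ -/
def diaIter : ℕ → Form → Form
  | 0, φ => φ
  | n+1, φ => .dia (diaIter n φ)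

/-- □^ωΓ = {□ⁿψ | n ∈ ℕ, ψ ∈ Γ} -/
def boxOmega (Γ : Set Form) : Set Form :=
  {χ | ∃ n ψ, ψ ∈ Γ ∧ χ = boxIter n ψ}

/-- The subframe of `F` generated by the point `w`. -/
def Frame.gen (F : Frame) (w : F.W) : Frame where
  W := {v : F.W // Relation.ReflTransGen F.R w v}
  R a b := F.R a.1 b.1
  nonempty := ⟨⟨w, Relation.ReflTransGen.refl⟩⟩

/-- A class of frames is closed under point-generated subframes. -/
def closedGen (C : Frame → Prop) : Prop :=
  ∀ F, C F → ∀ w : F.W, C (F.gen w)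

/-- Modal-free (purely propositional) formulas. -/
def modalFree : Form → Prop
  | .var _ => True
  | .bot => True
  | .imp φ ψ => modalFree φ ∧ modalFree ψ
  | .box _ => False


lemma gen_sat (F : Frame) (w : F.W) (V : ℕ → F.W → Prop) (χ : Form) :
    ∀ v : (F.gen w).W, (F.gen w).sat (fun n a => V n a.1) v χ ↔ F.sat V v.1 χ := by
  induction χ with
  | var n => intro v; rfl
  | bot => intro v; rfl
  | imp φ ψ ihφ ihψ => intro v; simp only [Frame.sat, ihφ v, ihψ v]
  | box φ ih =>
    intro v
    constructor
    · intro h u hu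
      have hu' : Relation.ReflTransGen F.R w u := v.2.tail hu
      exact (ih ⟨u, hu'⟩).mp (h ⟨u, hu'⟩ hu)
    · intro h u hu
      exact (ih u).mpr (h u.1 hu)

/-- for classes of reflexive and transitive frames closed under
point-generated subframes, Γ ⊨^g_F φ iff □Γ ⊨_F □φ iff □Γ ⊨_F φ. -/
theorem stmt8 (C : Frame → Prop)
    (hrefl : ∀ F, C F → Reflexive F.R)
    (htrans : ∀ F, C F → Transitive F.R)
    (hgen : closedGen C) (Γ : Set Form) (φ : Form) :
    (globalConseq C Γ φ ↔ localConseq C (Form.box '' Γ) (.box φ)) ∧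
    (localConseq C (Form.box '' Γ) (.box φ) ↔ localConseq C (Form.box '' Γ) φ) := by
  constructor
  · constructor
    · intro hg F hF V w hw
      intro u hwu
      have hCg := hgen F hF w
      have hφ : ∀ v : (F.gen w).W, (F.gen w).sat (fun n a => V n a.1) v φ := by
        apply hg _ hCg
        intro ψ hψ v
        rw [gen_sat]
        have hRwv : F.R w v.1 := by
          rcases (Relation.reflTransGen_iff_eq_or_transGen.mp v.2) with h | h
          · rw [h]; exact hrefl F hF w
          · exact Relation.TransGen.trans_induction_on h (fun h => h)
              (fun _ _ h1 h2 => htrans F hF h1 h2)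
        exact hw _ ⟨ψ, hψ, rfl⟩ v.1 hRwv
      have := hφ ⟨u, Relation.ReflTransGen.single hwu⟩
      exact (gen_sat F w V φ _).mp this
    · intro hl F hF V hΓ w
      have := hl F hF V w (by rintro _ ⟨ψ, hψ, rfl⟩ u hu; exact hΓ ψ hψ u)
      exact this w (hrefl F hF w)
  · constructor
    · intro hl F hF V w hw
      exact hl F hF V w hw w (hrefl F hF w)
    · intro hl F hF V w hw u hwu
      apply hl F hF V u
      rintro _ ⟨ψ, hψ, rfl⟩ v huv
      exact hw _ ⟨ψ, hψ, rfl⟩ v (htrans F hF hwu huv)
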